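/- Comparison lemma (upper direction): Let p ∈ (0,1), let (q(k))_{k≥1} be a sequence of positive reals satisfying the recursion q(k) = (1/(1 + ((1-p)/p)Q(k))) · ( ∑_{1 ≤ i < k/2} q(i)q(k-i) + ((1-p)/(2p))q(k)^2 + 1_{k even}·(1/2)q(k/2)^2 ) for all k ≥ 2, where Q(k) = ∑_{i ≥ k} q(i) ≤ 1. Let (q̂(k))_{k≥1} be a sequence of positive reals such that for all sufficiently large k, q̂(k) ≥ (1/(1 + ((1-p)/p)Q(k))) · ( ∑_{1 ≤ i < k/2} q(i)q̂(k-i) + ((1-p)/(2p))q(k)^2 + 1_{k even}·(1/2)q(k/2)^2 ). Then there exists C > 0 such that q(k) ≤ C·q̂(k) for all k ≥ 1. -/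

import Mathlib

/-- Comparison lemma (upper direction): if `q̂` satisfies the inequation associated to the
recursion for `q` (with `≥`) for all sufficiently large `k`, then `q(k) ≤ C·q̂(k)` for all
`k ≥ 1`, for some constant `C > 0`. -/
theorem comparison_upper (p : ℝ) (hp : p ∈ Set.Ioo (0 : ℝ) 1)
    (q Q qhat : ℕ → ℝ)
    (hq : ∀ k, 1 ≤ k → 0 < q k) (hsum : Summable q)
    (hQ : ∀ k, Q k = ∑' i : ℕ, if k ≤ i then q i else 0)
    (hQ1 : ∀ k, Q k ≤ 1)
    (hrec : ∀ k, 2 ≤ k → q k = (1 / (1 + ((1 - p) / p) * Q k)) *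
      (∑ i ∈ Finset.Icc 1 ((k - 1) / 2), q i * q (k - i)
        + ((1 - p) / (2 * p)) * (q k) ^ 2
        + (if Even k then (1 / 2) * (q (k / 2)) ^ 2 else 0)))
    (hqhat : ∀ k, 1 ≤ k → 0 < qhat k)
    (hineq : ∃ k₀ : ℕ, ∀ k, k₀ ≤ k → qhat k ≥ (1 / (1 + ((1 - p) / p) * Q k)) *
      (∑ i ∈ Finset.Icc 1 ((k - 1) / 2), q i * qhat (k - i)
        + ((1 - p) / (2 * p)) * (q k) ^ 2
        + (if Even k then (1 / 2) * (q (k / 2)) ^ 2 else 0))) :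
    ∃ C > 0, ∀ k, 1 ≤ k → q k ≤ C * qhat k := by
  obtain ⟨hp0, hp1⟩ := hp
  obtain ⟨k₀, hk₀⟩ := hineq
  set K := max k₀ 2 with hKdef
  set C := 1 + ∑ j ∈ Finset.Icc 1 K, q j / qhat j with hCdef
  have hterm : ∀ j ∈ Finset.Icc 1 K, 0 ≤ q j / qhat j := by
    intro j hj
    have h1 := (Finset.mem_Icc.mp hj).1
    exact le_of_lt (div_pos (hq j h1) (hqhat j h1))
  have hC1 : 1 ≤ C := by
    have := Finset.sum_nonneg hterm
    simp only [hCdef]; linarith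
  refine ⟨C, by linarith, ?_⟩
  intro k
  induction k using Nat.strong_induction_on with
  | _ k IH =>
  intro hk1
  by_cases hkK : k ≤ K
  · -- base case
    have hmem : k ∈ Finset.Icc 1 K := Finset.mem_Icc.mpr ⟨hk1, hkK⟩
    have h1 : q k / qhat k ≤ ∑ j ∈ Finset.Icc 1 K, q j / qhat j :=
      Finset.single_le_sum hterm hmem
    have h2 : q k / qhat k ≤ C := by simp only [hCdef]; linarith
    exact (div_le_iff₀ (hqhat k hk1)).mp h2
  · push_neg at hkK
    have hk2 : 2 ≤ k := le_trans (le_max_right _ _) hkK.le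
    have hkk₀ : k₀ ≤ k := le_trans (le_max_left _ _) hkK.le
    have hc : 0 < (1 - p) / p := div_pos (by linarith) hp0
    have hQk : 0 ≤ Q k := by
      rw [hQ k]
      apply tsum_nonneg
      intro i
      split_ifs with h
      · exact (hq i (le_trans hk1 h)).le
      · exact le_refl 0
    have hden : 0 < 1 + (1 - p) / p * Q k := by nlinarith
    have hf : 0 < 1 / (1 + (1 - p) / p * Q k) := by positivity
    set B := ((1 - p) / (2 * p)) * (q k) ^ 2
        + (if Even k then (1 / 2) * (q (k / 2)) ^ 2 else 0) with hBdef
    have hB : 0 ≤ B := by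
      have h1 : 0 ≤ ((1 - p) / (2 * p)) * (q k) ^ 2 :=
        mul_nonneg (div_nonneg (by linarith) (by linarith)) (sq_nonneg _)
      have h2 : (0:ℝ) ≤ (if Even k then (1 / 2) * (q (k / 2)) ^ 2 else 0) := by
        split_ifs
        · positivity
        · exact le_refl 0
      simp only [hBdef]; linarith
    have hS : ∑ i ∈ Finset.Icc 1 ((k - 1) / 2), q i * q (k - i)
        ≤ C * ∑ i ∈ Finset.Icc 1 ((k - 1) / 2), q i * qhat (k - i) := by
      rw [Finset.mul_sum]
      apply Finset.sum_le_sum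
      intro i hi
      obtain ⟨hi1, hi2⟩ := Finset.mem_Icc.mp hi
      have hlt : k - i < k := Nat.sub_lt (by omega) (by omega)
      have hge : 1 ≤ k - i := by
        have : (k - 1) / 2 ≤ k - 1 := Nat.div_le_self _ _
        omega
      have := IH (k - i) hlt hge
      calc q i * q (k - i) ≤ q i * (C * qhat (k - i)) :=
            mul_le_mul_of_nonneg_left this (hq i hi1).le
        _ = C * (q i * qhat (k - i)) := by ring
    have hrk := hrec k hk2
    have hik := hk₀ k hkk₀
    rw [ge_iff_le, add_assoc, ← hBdef] at hik
    rw [hrk, add_assoc, ← hBdef]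
    have key : (∑ i ∈ Finset.Icc 1 ((k - 1) / 2), q i * q (k - i)) + B
        ≤ C * ((∑ i ∈ Finset.Icc 1 ((k - 1) / 2), q i * qhat (k - i)) + B) := by
      have hCB : B ≤ C * B := le_mul_of_one_le_left hB hC1
      have : C * ((∑ i ∈ Finset.Icc 1 ((k - 1) / 2), q i * qhat (k - i)) + B)
          = C * (∑ i ∈ Finset.Icc 1 ((k - 1) / 2), q i * qhat (k - i)) + C * B := by ring
      rw [this]
      exact add_le_add hS hCB
    calc (1 / (1 + (1 - p) / p * Q k)) *
          ((∑ i ∈ Finset.Icc 1 ((k - 1) / 2), q i * q (k - i)) + B)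
        ≤ (1 / (1 + (1 - p) / p * Q k)) *
          (C * ((∑ i ∈ Finset.Icc 1 ((k - 1) / 2), q i * qhat (k - i)) + B)) :=
          mul_le_mul_of_nonneg_left key hf.le
      _ = C * ((1 / (1 + (1 - p) / p * Q k)) *
          ((∑ i ∈ Finset.Icc 1 ((k - 1) / 2), q i * qhat (k - i)) + B)) := by ring
      _ ≤ C * qhat k := mul_le_mul_of_nonneg_left hik (by linarith)
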